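/- For every n ≥ 1, the intersection ker μ ∩ ker μ° inside M_n ⊗ M_n equals the tensor product sl_n ⊗ sl_n of the space of traceless matrices with itself, embedded suitably: precisely, after identifying M_n ⊗ M_n with End(V) ⊗ End(V) for V = ℂⁿ, an element lies in ker μ ∩ ker μ° if and only if it lies in the span of tensors a ⊗ b with a, b traceless, under the cyclic reindexing described by evaluation against the inner tensorands. -/

import Mathlib

open TensorProduct

/-- The multiplication map `μ : Mₙ ⊗ Mₙ → Mₙ`, `a ⊗ b ↦ a * b`. -/
noncomputable def matMul (n : ℕ) :
    Matrix (Fin n) (Fin n) ℂ ⊗[ℂ] Matrix (Fin n) (Fin n) ℂ →ₗ[ℂ] Matrix (Fin n) (Fin n) ℂ :=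
  LinearMap.mul' ℂ _

/-- The opposite multiplication map `μ° : Mₙ ⊗ Mₙ → Mₙ`, `a ⊗ b ↦ b * a`. -/
noncomputable def matMulOp (n : ℕ) :
    Matrix (Fin n) (Fin n) ℂ ⊗[ℂ] Matrix (Fin n) (Fin n) ℂ →ₗ[ℂ] Matrix (Fin n) (Fin n) ℂ :=
  (LinearMap.mul' ℂ _).comp (TensorProduct.comm ℂ _ _).toLinearMap

/-- The element of `Mₙ ⊗ Mₙ` obtained from a pair `(a, b)` of matrices by the cyclic
reindexing: identifying `Mₙ ⊗ Mₙ` with `V ⊗ V* ⊗ V ⊗ V*` (`V = ℂⁿ`), the inner pair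
`V* ⊗ V` carries `a` and the outer pair `V ⊗ V*` carries `b`; in coordinates its
`((i,j),(k,l))` entry is `a j k * b l i`. -/
noncomputable def cyclicEmbed (n : ℕ) (a b : Matrix (Fin n) (Fin n) ℂ) :
    Matrix (Fin n) (Fin n) ℂ ⊗[ℂ] Matrix (Fin n) (Fin n) ℂ :=
  ∑ i : Fin n, ∑ j : Fin n, ∑ k : Fin n, ∑ l : Fin n,
    (a j k * b l i) • (Matrix.single i j (1 : ℂ) ⊗ₜ[ℂ] Matrix.single k l (1 : ℂ))

namespace Stmt2Aux

open Matrix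

variable (n : ℕ)

local notation "M" => Matrix (Fin n) (Fin n) ℂ

/-- `cyclicEmbed` as a bilinear map. -/
noncomputable def ceBil : M →ₗ[ℂ] M →ₗ[ℂ] M ⊗[ℂ] M :=
  LinearMap.mk₂ ℂ (cyclicEmbed n)
    (by
      intro a a' b
      unfold cyclicEmbed
      simp [add_mul, add_smul, Finset.sum_add_distrib])
    (by
      intro r a b
      unfold cyclicEmbed
      simp [Finset.smul_sum, smul_smul, mul_assoc])
    (by
      intro a b b'
      unfold cyclicEmbed
      simp [mul_add, add_smul, Finset.sum_add_distrib])
    (by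
      intro r a b
      unfold cyclicEmbed
      simp [Finset.smul_sum, smul_smul, mul_assoc]
      congr 1; ext i; congr 1; ext j; congr 1; ext k; congr 1; ext l
      ring_nf)

/-- The linear map `Φ : Mₙ ⊗ Mₙ → Mₙ ⊗ Mₙ` induced by `cyclicEmbed`. -/
noncomputable def phi : M ⊗[ℂ] M →ₗ[ℂ] M ⊗[ℂ] M :=
  TensorProduct.lift (ceBil n)

@[simp] lemma phi_tmul (a b : M) : phi n (a ⊗ₜ[ℂ] b) = cyclicEmbed n a b := rfl

lemma key (a b c d : Fin n) :
    cyclicEmbed n (single a b 1) (single c d 1) =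
      single d a (1 : ℂ) ⊗ₜ[ℂ] single b c 1 := by
  unfold cyclicEmbed
  simp [single, Matrix.of_apply, ite_and, mul_ite, mul_one, mul_zero, ite_smul,
    Finset.sum_ite_eq, Finset.sum_ite_eq']

/-- The tensor-product basis of `Mₙ ⊗ Mₙ` by standard basis matrices. -/
noncomputable def bT : Module.Basis ((Fin n × Fin n) × (Fin n × Fin n)) ℂ (M ⊗[ℂ] M) :=
  (Matrix.stdBasis ℂ (Fin n) (Fin n)).tensorProduct (Matrix.stdBasis ℂ (Fin n) (Fin n))

lemma bT_apply (a b c d : Fin n) :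
    bT n ((a, b), (c, d)) = single a b (1 : ℂ) ⊗ₜ[ℂ] single c d (1 : ℂ) := by
  rw [bT, Module.Basis.tensorProduct_apply', Matrix.stdBasis_eq_single,
    Matrix.stdBasis_eq_single]

noncomputable def psi : M ⊗[ℂ] M →ₗ[ℂ] M ⊗[ℂ] M :=
  (phi n).comp (TensorProduct.comm ℂ _ _).toLinearMap

lemma phi_psi : (phi n).comp (psi n) = LinearMap.id := by
  refine Module.Basis.ext (bT n) fun ⟨⟨a, b⟩, ⟨c, d⟩⟩ => ?_
  simp only [bT_apply, psi, LinearMap.comp_apply, LinearEquiv.coe_coe, comm_tmul, phi_tmul,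
    key, LinearMap.id_apply]

lemma psi_phi : (psi n).comp (phi n) = LinearMap.id := by
  refine Module.Basis.ext (bT n) fun ⟨⟨a, b⟩, ⟨c, d⟩⟩ => ?_
  simp only [bT_apply, psi, LinearMap.comp_apply, phi_tmul, key, LinearEquiv.coe_coe, comm_tmul,
    LinearMap.id_apply]

/-- `Φ` as a linear equivalence. -/
noncomputable def phiE : (M ⊗[ℂ] M) ≃ₗ[ℂ] (M ⊗[ℂ] M) :=
  LinearEquiv.ofLinear (phi n) (psi n) (phi_psi n) (psi_phi n)

@[simp] lemma phiE_apply (z : M ⊗[ℂ] M) : phiE n z = phi n z := rfl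

noncomputable def trM : M →ₗ[ℂ] ℂ := Matrix.traceLinearMap (Fin n) ℂ ℂ

/-- `μ ∘ Φ` in terms of the trace on the first factor. -/
lemma comp_mul :
    (matMul n).comp (phi n) =
      ((Matrix.transposeLinearEquiv (Fin n) (Fin n) ℂ ℂ).toLinearMap.comp
        ((TensorProduct.lid ℂ M).toLinearMap.comp
          (TensorProduct.map (trM n) LinearMap.id))) := by
  refine Module.Basis.ext (bT n) fun ⟨⟨a, b⟩, ⟨c, d⟩⟩ => ?_
  simp only [bT_apply, LinearMap.comp_apply, phi_tmul, key, map_tmul, LinearMap.id_apply,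
    LinearEquiv.coe_coe, lid_tmul, matMul, LinearMap.mul'_apply, trM,
    Matrix.traceLinearMap_apply]
  rw [_root_.map_smul]
  by_cases hab : a = b
  · subst hab
    rw [Matrix.single_mul_single_same, Matrix.trace_single_eq_same, one_smul, one_mul]
    ext i j
    simp [Matrix.transposeLinearEquiv_apply, Matrix.transpose_apply, Matrix.single,
      and_comm]
  · rw [Matrix.single_mul_single_of_ne (h := hab), Matrix.trace_single_eq_of_ne _ _ _
      hab, zero_smul]

/-- `μ° ∘ Φ` in terms of the trace on the second factor. -/
lemma comp_mulOp :
    (matMulOp n).comp (phi n) =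
      ((Matrix.transposeLinearEquiv (Fin n) (Fin n) ℂ ℂ).toLinearMap.comp
        ((TensorProduct.rid ℂ M).toLinearMap.comp
          (TensorProduct.map LinearMap.id (trM n)))) := by
  refine Module.Basis.ext (bT n) fun ⟨⟨a, b⟩, ⟨c, d⟩⟩ => ?_
  simp only [bT_apply, LinearMap.comp_apply, phi_tmul, key, map_tmul, LinearMap.id_apply,
    LinearEquiv.coe_coe, rid_tmul, matMulOp, comm_tmul, LinearMap.mul'_apply, trM,
    Matrix.traceLinearMap_apply]
  rw [_root_.map_smul]
  by_cases hcd : c = d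
  · subst hcd
    rw [Matrix.single_mul_single_same, Matrix.trace_single_eq_same, one_smul, one_mul]
    ext i j
    simp [Matrix.transposeLinearEquiv_apply, Matrix.transpose_apply, Matrix.single,
      and_comm]
  · rw [Matrix.single_mul_single_of_ne (h := hcd), Matrix.trace_single_eq_of_ne _ _ _
      hcd, zero_smul]

lemma map_sub_left (f g h : M →ₗ[ℂ] M) :
    TensorProduct.map (f - g) h = TensorProduct.map f h - TensorProduct.map g h := by
  apply TensorProduct.ext'
  intro a b
  simp [sub_tmul]

lemma map_sub_right (f g h : M →ₗ[ℂ] M) :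
    TensorProduct.map f (g - h) = TensorProduct.map f g - TensorProduct.map f h := by
  apply TensorProduct.ext'
  intro a b
  simp [tmul_sub]

/-- The core lemma: elements killed by both partial traces lie in `sl ⊗ sl`. -/
lemma core (hn : 1 ≤ n) (y : M ⊗[ℂ] M)
    (h1 : TensorProduct.map (trM n) LinearMap.id y = 0)
    (h2 : TensorProduct.map LinearMap.id (trM n) y = 0) :
    y ∈ Submodule.span ℂ
      {z : M ⊗[ℂ] M | ∃ a b : M, a.trace = 0 ∧ b.trace = 0 ∧ z = a ⊗ₜ[ℂ] b} := by
  have hn0 : (n : ℂ) ≠ 0 := Nat.cast_ne_zero.mpr (by omega)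
  set c : ℂ := (n : ℂ)⁻¹ with hc
  set e : ℂ →ₗ[ℂ] M := LinearMap.toSpanSingleton ℂ M 1 with he
  set F : M →ₗ[ℂ] M := e.comp (trM n) with hF
  set P : M →ₗ[ℂ] M := LinearMap.id - c • F with hP
  have hPa : ∀ a : M, P a = a - c • ((a.trace : ℂ) • (1 : M)) := by
    intro a
    simp [hP, hF, he, trM, LinearMap.toSpanSingleton_apply]
  have hPtr : ∀ a : M, (P a).trace = 0 := by
    intro a
    rw [hPa, hc, Matrix.trace_sub, Matrix.trace_smul, Matrix.trace_smul, Matrix.trace_one]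
    simp only [smul_eq_mul, Fintype.card_fin]
    field_simp
    ring
  -- any g: map F g y = 0 and map g F y = 0
  have hFg : ∀ g : M →ₗ[ℂ] M, TensorProduct.map F g y = 0 := by
    intro g
    have : TensorProduct.map F g =
        (TensorProduct.map e g).comp (TensorProduct.map (trM n) LinearMap.id) := by
      rw [hF, ← TensorProduct.map_comp, LinearMap.comp_id]
    rw [this, LinearMap.comp_apply, h1, map_zero]
  have hgF : ∀ g : M →ₗ[ℂ] M, TensorProduct.map g F y = 0 := by
    intro g
    have : TensorProduct.map g F =
        (TensorProduct.map g e).comp (TensorProduct.map LinearMap.id (trM n)) := by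
      rw [hF, ← TensorProduct.map_comp, LinearMap.comp_id]
    rw [this, LinearMap.comp_apply, h2, map_zero]
  have hPPy : TensorProduct.map P P y = y := by
    have e1 : TensorProduct.map P P =
        TensorProduct.map LinearMap.id P - c • TensorProduct.map F P := by
      rw [hP, map_sub_left, TensorProduct.map_smul_left]
    have e2 : TensorProduct.map LinearMap.id P =
        TensorProduct.map (LinearMap.id : M →ₗ[ℂ] M) (LinearMap.id : M →ₗ[ℂ] M) -
          c • TensorProduct.map LinearMap.id F := by
      rw [hP, map_sub_right, TensorProduct.map_smul_right]
    rw [e1, LinearMap.sub_apply, e2, LinearMap.sub_apply, LinearMap.smul_apply,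
      LinearMap.smul_apply, hFg, hgF]
    simp [TensorProduct.map_id]
  have hrange : ∀ z : M ⊗[ℂ] M, TensorProduct.map P P z ∈ Submodule.span ℂ
      {z : M ⊗[ℂ] M | ∃ a b : M, a.trace = 0 ∧ b.trace = 0 ∧ z = a ⊗ₜ[ℂ] b} := by
    intro z
    induction z using TensorProduct.induction_on with
    | zero => simp
    | tmul a b =>
      rw [map_tmul]
      exact Submodule.subset_span ⟨P a, P b, hPtr a, hPtr b, rfl⟩
    | add u v hu hv =>
      rw [map_add]
      exact add_mem hu hv
  have := hrange y
  rwa [hPPy] at this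

end Stmt2Aux

theorem stmt2 (n : ℕ) (hn : 1 ≤ n) (x : Matrix (Fin n) (Fin n) ℂ ⊗[ℂ] Matrix (Fin n) (Fin n) ℂ) :
    (x ∈ LinearMap.ker (matMul n) ⊓ LinearMap.ker (matMulOp n)) ↔
      x ∈ Submodule.span ℂ
        {y | ∃ a b : Matrix (Fin n) (Fin n) ℂ,
          a.trace = 0 ∧ b.trace = 0 ∧ y = cyclicEmbed n a b} := by
  open Stmt2Aux in
  classical
  set y := (phiE n).symm x with hy
  have hx : phi n y = x := (phiE n).apply_symm_apply x
  -- LHS characterization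
  have hL1 : matMul n x = 0 ↔ TensorProduct.map (trM n) LinearMap.id y = 0 := by
    rw [← hx, ← LinearMap.comp_apply, comp_mul]
    simp only [LinearMap.comp_apply, LinearEquiv.coe_coe, LinearEquiv.map_eq_zero_iff]
  have hL2 : matMulOp n x = 0 ↔ TensorProduct.map LinearMap.id (trM n) y = 0 := by
    rw [← hx, ← LinearMap.comp_apply, comp_mulOp]
    simp only [LinearMap.comp_apply, LinearEquiv.coe_coe, LinearEquiv.map_eq_zero_iff]
  -- RHS characterization
  have hS : {y | ∃ a b : Matrix (Fin n) (Fin n) ℂ,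
        a.trace = 0 ∧ b.trace = 0 ∧ y = cyclicEmbed n a b} =
      (phi n) '' {z | ∃ a b : Matrix (Fin n) (Fin n) ℂ,
        a.trace = 0 ∧ b.trace = 0 ∧ z = a ⊗ₜ[ℂ] b} := by
    ext z
    constructor
    · rintro ⟨a, b, ha, hb, rfl⟩
      exact ⟨a ⊗ₜ[ℂ] b, ⟨a, b, ha, hb, rfl⟩, rfl⟩
    · rintro ⟨w, ⟨a, b, ha, hb, rfl⟩, rfl⟩
      exact ⟨a, b, ha, hb, rfl⟩
  have hR : x ∈ Submodule.span ℂ {y | ∃ a b : Matrix (Fin n) (Fin n) ℂ,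
        a.trace = 0 ∧ b.trace = 0 ∧ y = cyclicEmbed n a b} ↔
      y ∈ Submodule.span ℂ {z | ∃ a b : Matrix (Fin n) (Fin n) ℂ,
        a.trace = 0 ∧ b.trace = 0 ∧ z = a ⊗ₜ[ℂ] b} := by
    rw [hS, Submodule.span_image]
    have : (phi n) = ((phiE n : _ →ₗ[ℂ] _)) := rfl
    rw [this, Submodule.mem_map_equiv]
  rw [Submodule.mem_inf, LinearMap.mem_ker, LinearMap.mem_ker, hL1, hL2, hR]
  constructor
  · rintro ⟨h1, h2⟩
    exact core n hn y h1 h2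
  · intro h
    have hle : Submodule.span ℂ {z | ∃ a b : Matrix (Fin n) (Fin n) ℂ,
          a.trace = 0 ∧ b.trace = 0 ∧ z = a ⊗ₜ[ℂ] b} ≤
        LinearMap.ker (TensorProduct.map (trM n) LinearMap.id) ⊓
          LinearMap.ker (TensorProduct.map LinearMap.id (trM n)) := by
      rw [Submodule.span_le]
      rintro z ⟨a, b, ha, hb, rfl⟩
      constructor
      · simp only [SetLike.mem_coe, LinearMap.mem_ker, map_tmul, LinearMap.id_apply, trM,
          Matrix.traceLinearMap_apply, ha, zero_tmul]
      · simp only [SetLike.mem_coe, LinearMap.mem_ker, map_tmul, LinearMap.id_apply, trM,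
          Matrix.traceLinearMap_apply, hb, tmul_zero]
    have := hle h
    rw [Submodule.mem_inf, LinearMap.mem_ker, LinearMap.mem_ker] at this
    exact this
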